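/- Let T* denote the H-adjoint of T. Suppose the V-convergence hypotheses hold and S_{2,h} satisfies both β(h)⁻¹ inf_{w ∈ S_{2,h}} ‖v − w‖_V → 0 as h → 0 for each v ∈ V, and γ(h) := sup{ inf_{w ∈ S_{2,h}} ‖T*v − w‖_V : v ∈ S_{2,h}, ‖v‖_V = 1 } → 0 as h → 0. Then T* maps V into V, ε_V(h) → 0 as h → 0, and ε_V(h) = O(γ(h)). -/

import Mathlib

open scoped InnerProductSpace Topology
open Filter

noncomputable section

/-- The containment gap `δ(M, N) = sup_{x ∈ M} dist(x, N)/‖x‖` between subspaces. -/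
noncomputable def subGap {V : Type*} [NormedAddCommGroup V] [InnerProductSpace ℂ V]
    (M N : Submodule ℂ V) : ℝ :=
  ⨆ x : M, Metric.infDist (x : V) (N : Set V) / ‖(x : V)‖

/-- The gap between (the graphs of) two bounded operators. -/
noncomputable def opGap {V : Type*} [NormedAddCommGroup V] [InnerProductSpace ℂ V]
    (A B : V →L[ℂ] V) : ℝ :=
  ⨆ x : V, ⨅ y : V, (‖x - y‖ + ‖A x - B y‖) / (‖x‖ + ‖A x‖)

/-- The discrete inf–sup constant `β` of `(S₁, S₂)` relative to the sesquilinear form `a`. -/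
noncomputable def infSupForm {V : Type*} [NormedAddCommGroup V] [InnerProductSpace ℂ V]
    (a : V →ₗ⋆[ℂ] V →ₗ[ℂ] ℂ) (S1 S2 : Submodule ℂ V) : ℝ :=
  ⨅ u : {u : V // u ∈ S2 ∧ ‖u‖ = 1}, ⨆ v : {v : V // v ∈ S1 ∧ ‖v‖ = 1},
    ‖a (u : V) (v : V)‖

/-- `ε_V = sup_{u ∈ U} ‖P T (I - P) u‖_V / ‖(I - Π₁)u‖_V`; here `‖(I - Π₁)u‖ = dist(u, S₁)`
since `Π₁` is the `V`-orthogonal projection onto `S₁`. -/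
noncomputable def epsV {V : Type*} [NormedAddCommGroup V] [InnerProductSpace ℂ V]
    (T P : V →L[ℂ] V) (U S1 : Submodule ℂ V) : ℝ :=
  ⨆ u : U, ‖P (T ((u : V) - P (u : V)))‖ / Metric.infDist (u : V) (S1 : Set V)

/-- The maximal invariant subspace `⋃_k ker (T - μ)^k` associated with `μ`. -/
noncomputable def maxInv {V : Type*} [NormedAddCommGroup V] [InnerProductSpace ℂ V]
    (T : V →L[ℂ] V) (mu : ℂ) : Submodule ℂ V :=
  ⨆ k : ℕ, LinearMap.ker (((T : V →ₗ[ℂ] V) - mu • LinearMap.id) ^ k)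

/-- `μ` is an isolated point of the spectrum. -/
def IsIsolatedEig {V : Type*} [NormedAddCommGroup V] [InnerProductSpace ℂ V]
    [CompleteSpace V] (T : V →L[ℂ] V) (mu : ℂ) : Prop :=
  mu ∈ spectrum ℂ T ∧ ∃ ε > 0, ∀ z ∈ spectrum ℂ T, z ≠ mu → ε ≤ ‖z - mu‖

/-- The data of the variational (Galerkin) setting of Section 2 of the paper:  a Gelfand
triple `V ↪ H`, a bounded coercive sectorial sesquilinear form `a` on `V = Dom(a)`
(conjugate-linear in the first argument), and the bounded solution operator
`T = A⁻¹ : H → V` characterized by `a(u, Tf) = ⟨u, f⟩_H`. -/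
structure FormSetting (V H : Type*) [NormedAddCommGroup V] [InnerProductSpace ℂ V]
    [CompleteSpace V] [NormedAddCommGroup H] [InnerProductSpace ℂ H] [CompleteSpace H] where
  /-- the continuous dense imbedding `V ↪ H` -/
  incl : V →L[ℂ] H
  incl_inj : Function.Injective incl
  incl_dense : DenseRange incl
  incl_norm : ∀ v : V, ‖incl v‖ ≤ ‖v‖
  /-- the sesquilinear form `a`, conjugate-linear in its first argument -/
  a : V →ₗ⋆[ℂ] V →ₗ[ℂ] ℂ
  /-- `a` is bounded on `V` -/
  bound : ℝ
  bound_pos : 0 < bound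
  a_bounded : ∀ u v : V, ‖a u v‖ ≤ bound * ‖u‖ * ‖v‖
  /-- `a` is sectorial: `Re a(v,v) ≥ α‖v‖_H²` and `|Im a(v,v)| ≤ M(Re a(v,v) - α‖v‖_H²)` -/
  alpha : ℝ
  alpha_pos : 0 < alpha
  sectM : ℝ
  sectM_pos : 0 < sectM
  sect_re : ∀ v : V, alpha * ‖incl v‖ ^ 2 ≤ (a v v).re
  sect_im : ∀ v : V, |(a v v).im| ≤ sectM * ((a v v).re - alpha * ‖incl v‖ ^ 2)
  /-- the `V`-norm is equivalent to the norm induced by `[Re a]` -/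
  equiv_lo : ℝ
  equiv_lo_pos : 0 < equiv_lo
  equiv_hi : ℝ
  equiv_hi_pos : 0 < equiv_hi
  equiv_norm_lo : ∀ v : V, equiv_lo * ‖v‖ ^ 2 ≤ (a v v).re
  equiv_norm_hi : ∀ v : V, (a v v).re ≤ equiv_hi * ‖v‖ ^ 2
  /-- the bounded solution operator `T : H → V`, `a(u, Tf) = ⟨u, f⟩_H` -/
  T : H →L[ℂ] V
  hT : ∀ (u : V) (f : H), a u (T f) = ⟪incl u, f⟫_ℂ

end

section AuxiliaryLemmas

variable {V H : Type*} [NormedAddCommGroup V] [InnerProductSpace ℂ V] [CompleteSpace V]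
  [NormedAddCommGroup H] [InnerProductSpace ℂ H] [CompleteSpace H]

set_option linter.unusedSectionVars false

lemma le_mul_infDist {S : Set V} (hS : S.Nonempty) {K d : ℝ} (hK : 0 < K) {p : V}
    (h : ∀ s ∈ S, d ≤ K * dist p s) : d ≤ K * Metric.infDist p S := by
  by_contra hcon
  push_neg at hcon
  have h1 : Metric.infDist p S < d / K := by
    rw [lt_div_iff₀ hK]; linarith [hcon]
  obtain ⟨y, hy, hdy⟩ := (Metric.infDist_lt_iff hS).mp h1
  have := h y hy
  rw [lt_div_iff₀ hK] at hdy
  nlinarith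

lemma infDist_smul_le (S : Submodule ℂ V) (c : ℂ) (p : V) :
    Metric.infDist (c • p) (S : Set V) ≤ ‖c‖ * Metric.infDist p (S : Set V) := by
  have hS : (S : Set V).Nonempty := ⟨0, S.zero_mem⟩
  rcases eq_or_ne c 0 with rfl | hc
  · simp [Metric.infDist_zero_of_mem S.zero_mem]
  have hc' : (0 : ℝ) < ‖c‖ := norm_pos_iff.mpr hc
  apply le_mul_infDist hS hc'
  intro s hs
  calc Metric.infDist (c • p) (S : Set V) ≤ dist (c • p) (c • s) :=
        Metric.infDist_le_dist_of_mem (S.smul_mem c hs)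
    _ = ‖c‖ * dist p s := by rw [dist_eq_norm, dist_eq_norm, ← smul_sub, norm_smul]

lemma FormSetting.exists_riesz (F : FormSetting V H) :
    ∃ Z : V →ₗ[ℂ] V, (∀ u v : V, F.a u v = ⟪Z u, v⟫_ℂ) ∧ (∀ u, ‖Z u‖ ≤ F.bound * ‖u‖) := by
  have hC : ∀ u x : V, ‖F.a u x‖ ≤ F.bound * ‖u‖ * ‖x‖ := F.a_bounded
  set g : V → V := fun u => (InnerProductSpace.toDual ℂ V).symm
    (LinearMap.mkContinuous (F.a u) (F.bound * ‖u‖) (hC u)) with hgdef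
  have hg : ∀ u v, ⟪g u, v⟫_ℂ = F.a u v := fun u v => InnerProductSpace.toDual_symm_apply
  have hadd : ∀ u u', g (u + u') = g u + g u' := by
    intro u u'
    refine ext_inner_right ℂ fun v => ?_
    rw [hg, inner_add_left, hg, hg, map_add, LinearMap.add_apply]
  have hsmul : ∀ (c : ℂ) (u : V), g (c • u) = c • g u := by
    intro c u
    refine ext_inner_right ℂ fun v => ?_
    rw [hg, inner_smul_left, hg]
    rw [LinearMap.map_smulₛₗ]
    rfl
  refine ⟨{ toFun := g, map_add' := hadd, map_smul' := hsmul }, fun u v => (hg u v).symm, ?_⟩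
  intro u
  have : ‖g u‖ = ‖LinearMap.mkContinuous (F.a u) (F.bound * ‖u‖) (hC u)‖ :=
    LinearIsometryEquiv.norm_map _ _
  rw [LinearMap.coe_mk, AddHom.coe_mk]
  rw [this]
  exact LinearMap.mkContinuous_norm_le _ (mul_nonneg F.bound_pos.le (norm_nonneg u)) _

lemma riesz_surjective (Z : V →ₗ[ℂ] V) (c : ℝ) (hc : 0 < c) (C : ℝ)
    (hC : ∀ u, ‖Z u‖ ≤ C * ‖u‖) (hlow : ∀ v : V, c * ‖v‖ ≤ ‖Z v‖)
    (horth : ∀ v : V, ⟪Z v, v⟫_ℂ = 0 → v = 0) : Function.Surjective Z := by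
  have hlip : LipschitzWith (⟨max C 0, le_max_right _ _⟩ : NNReal) Z := by
    apply LipschitzWith.of_dist_le_mul
    intro x y
    rw [dist_eq_norm, dist_eq_norm, ← map_sub]
    exact (hC _).trans (by gcongr; exact le_max_left _ _)
  have hanti : AntilipschitzWith (⟨c⁻¹, by positivity⟩ : NNReal) Z := by
    apply AntilipschitzWith.of_le_mul_dist
    intro x y
    rw [dist_eq_norm, dist_eq_norm, ← map_sub]
    push_cast
    exact (le_inv_mul_iff₀ hc).mpr (hlow (x - y))
  have hclosed : IsClosed (Set.range Z) := hanti.isClosed_range hlip.uniformContinuous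
  have hKclosed : IsClosed ((LinearMap.range Z : Submodule ℂ V) : Set V) := by
    simpa [LinearMap.coe_range] using hclosed
  haveI : CompleteSpace (LinearMap.range Z) := hKclosed.completeSpace_coe
  have hbot : (LinearMap.range Z)ᗮ = ⊥ := by
    rw [Submodule.eq_bot_iff]
    intro v hv
    exact horth v ((Submodule.mem_orthogonal _ v).mp hv (Z v) (LinearMap.mem_range_self _ v))
  have htop := Submodule.orthogonal_eq_bot_iff.mp hbot
  exact LinearMap.range_eq_top.mp htop

lemma FormSetting.exists_sol (F : FormSetting V H) :
    ∃ (Z : V →ₗ[ℂ] V) (Sf : H → V),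
      (∀ u v : V, F.a u v = ⟪Z u, v⟫_ℂ) ∧ (∀ u, ‖Z u‖ ≤ F.bound * ‖u‖) ∧
      (∀ (f : H) (u : V), F.a (Sf f) u = ⟪f, F.incl u⟫_ℂ) := by
  obtain ⟨Z, hZ, hZb⟩ := F.exists_riesz
  have hre : ∀ v : V, F.equiv_lo * ‖v‖ ^ 2 ≤ (⟪Z v, v⟫_ℂ).re := by
    intro v; rw [← hZ]; exact F.equiv_norm_lo v
  have hlow : ∀ v : V, F.equiv_lo * ‖v‖ ≤ ‖Z v‖ := by
    intro v
    rcases eq_or_ne v 0 with rfl | hv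
    · simp
    have hnv : 0 < ‖v‖ := norm_pos_iff.mpr hv
    have h1 : F.equiv_lo * ‖v‖ ^ 2 ≤ ‖Z v‖ * ‖v‖ := by
      refine (hre v).trans ?_
      calc (⟪Z v, v⟫_ℂ).re ≤ ‖⟪Z v, v⟫_ℂ‖ := Complex.re_le_norm _
        _ = ‖⟪Z v, v⟫_ℂ‖ := rfl
        _ ≤ ‖Z v‖ * ‖v‖ := norm_inner_le_norm _ _
    nlinarith
  have horth : ∀ v : V, ⟪Z v, v⟫_ℂ = 0 → v = 0 := by
    intro v hv0
    have h1 := hre v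
    rw [hv0, Complex.zero_re] at h1
    have h2 : ‖v‖ ^ 2 ≤ 0 := by
      by_contra hpos
      push_neg at hpos
      nlinarith [F.equiv_lo_pos]
    have h3 : ‖v‖ ^ 2 = 0 := le_antisymm h2 (sq_nonneg _)
    have h4 : ‖v‖ = 0 := (pow_eq_zero_iff two_ne_zero).mp h3
    exact norm_eq_zero.mp h4
  have hsurj : Function.Surjective Z :=
    riesz_surjective Z F.equiv_lo F.equiv_lo_pos F.bound hZb hlow horth
  refine ⟨Z, fun f => (hsurj ((ContinuousLinearMap.adjoint F.incl) f)).choose, hZ, hZb, ?_⟩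
  intro f u
  rw [hZ, (hsurj ((ContinuousLinearMap.adjoint F.incl) f)).choose_spec,
    ContinuousLinearMap.adjoint_inner_left]

lemma exists_R (a : V →ₗ⋆[ℂ] V →ₗ[ℂ] ℂ) (Z : V →ₗ[ℂ] V)
    (hZ : ∀ u v : V, a u v = ⟪Z u, v⟫_ℂ) (b : ℝ) (hZb : ∀ u, ‖Z u‖ ≤ b * ‖u‖)
    (S1 S2 : Submodule ℂ V) [FiniteDimensional ℂ S1] [FiniteDimensional ℂ S2]
    (hdim : Module.finrank ℂ S1 = Module.finrank ℂ S2)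
    (β : ℝ) (hβpos : 0 < β) (hβ : β = infSupForm a S1 S2) :
    ∃ R : V →L[ℂ] V, (∀ v, R v ∈ S2) ∧ (∀ v x, x ∈ S1 → a (R v) x = a v x) ∧
      (∀ w ∈ S2, R w = w) ∧ (∀ v, ‖R v‖ ≤ β⁻¹ * b * ‖v‖) := by
  haveI : CompleteSpace S1 := FiniteDimensional.complete ℂ S1
  set pr := S1.orthogonalProjectionOnto with hpr
  set y : S2 →ₗ[ℂ] S1 := (pr : V →ₗ[ℂ] S1) ∘ₗ (Z ∘ₗ S2.subtype) with hy
  have ykey : ∀ (u : S2) (x : V), x ∈ S1 → a (u : V) x = ⟪(y u : V), x⟫_ℂ := by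
    intro u x hx
    have h0 : ⟪(Z u - pr (Z (u : V)) : V), x⟫_ℂ = 0 :=
      Submodule.starProjection_inner_eq_zero (Z (u : V)) x hx
    rw [inner_sub_left, sub_eq_zero] at h0
    rw [hZ, h0]
    rfl
  have βlow : ∀ u : S2, β * ‖(u : V)‖ ≤ ‖(y u : V)‖ := by
    intro u
    rcases eq_or_ne u 0 with rfl | hu
    · simp
    have hu' : (u : V) ≠ 0 := fun h => hu (Subtype.ext h)
    have hn : (0 : ℝ) < ‖(u : V)‖ := norm_pos_iff.mpr hu'
    set n : ℝ := ‖(u : V)‖ with hndef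
    have hmem : ((n⁻¹ : ℝ) : ℂ) • (u : V) ∈ S2 := S2.smul_mem _ u.2
    have hnorm1 : ‖((n⁻¹ : ℝ) : ℂ) • (u : V)‖ = 1 := by
      rw [norm_smul, Complex.norm_real, Real.norm_eq_abs, abs_of_pos (by positivity)]
      field_simp
      exact hndef.symm
    set i : {v : V // v ∈ S2 ∧ ‖v‖ = 1} := ⟨((n⁻¹ : ℝ) : ℂ) • (u : V), hmem, hnorm1⟩ with hidef
    set u' : S2 := ((n⁻¹ : ℝ) : ℂ) • u with hu'def
    have hcoe : (i : V) = (u' : V) := rfl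
    have hbdd : BddBelow (Set.range fun u : {u : V // u ∈ S2 ∧ ‖u‖ = 1} =>
        ⨆ v : {v : V // v ∈ S1 ∧ ‖v‖ = 1}, ‖a (u : V) (v : V)‖) := by
      refine ⟨0, fun x hx => ?_⟩
      obtain ⟨j, rfl⟩ := hx
      exact Real.iSup_nonneg fun v => norm_nonneg _
    have h1 : β ≤ ⨆ v : {v : V // v ∈ S1 ∧ ‖v‖ = 1}, ‖a (i : V) (v : V)‖ := by
      rw [hβ]; exact ciInf_le hbdd i
    have h2 : (⨆ v : {v : V // v ∈ S1 ∧ ‖v‖ = 1}, ‖a (i : V) (v : V)‖) ≤ ‖(y u' : V)‖ := by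
      refine Real.iSup_le (fun v => ?_) (norm_nonneg _)
      rw [hcoe, ykey u' (v : V) v.2.1]
      calc ‖⟪(y u' : V), (v : V)⟫_ℂ‖ ≤ ‖(y u' : V)‖ * ‖(v : V)‖ := norm_inner_le_norm _ _
        _ = ‖(y u' : V)‖ := by rw [v.2.2, mul_one]
    have h3 : ‖(y u' : V)‖ = n⁻¹ * ‖(y u : V)‖ := by
      rw [hu'def, map_smul]
      rw [Submodule.coe_smul, norm_smul, Complex.norm_real, Real.norm_eq_abs,
        abs_of_pos (by positivity)]
    have h4 := h1.trans h2
    rw [h3] at h4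
    calc β * n ≤ (n⁻¹ * ‖(y u : V)‖) * n := by gcongr
      _ = ‖(y u : V)‖ := by field_simp
  have yinj : Function.Injective y := by
    rw [← LinearMap.ker_eq_bot, Submodule.eq_bot_iff]
    intro u hu
    have h0 : (y u : V) = 0 := by rw [LinearMap.mem_ker.mp hu]; rfl
    have h1 := βlow u
    rw [h0, norm_zero] at h1
    have h2 : ‖(u : V)‖ ≤ 0 := by nlinarith [norm_nonneg (u : V)]
    have h3 : (u : V) = 0 := norm_le_zero_iff.mp h2
    exact Subtype.ext h3
  have ysurj : Function.Surjective y := by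
    have hker : LinearMap.ker y = ⊥ := LinearMap.ker_eq_bot.mpr yinj
    have hrank := LinearMap.finrank_range_add_finrank_ker y
    rw [hker, finrank_bot, add_zero] at hrank
    have : LinearMap.range y = ⊤ := by
      apply Submodule.eq_top_of_finrank_eq
      rw [hrank, hdim]
    exact LinearMap.range_eq_top.mp this
  set ye := LinearEquiv.ofBijective y ⟨yinj, ysurj⟩ with hye
  set R0 : V →ₗ[ℂ] V :=
    S2.subtype ∘ₗ (ye.symm.toLinearMap ∘ₗ ((pr : V →ₗ[ℂ] S1) ∘ₗ Z)) with hR0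
  have hR0eq : ∀ v : V, y (ye.symm (pr (Z v))) = pr (Z v) := fun v =>
    ye.apply_symm_apply (pr (Z v))
  have hR0mem : ∀ v : V, R0 v ∈ S2 := fun v => (ye.symm (pr (Z v))).2
  have hR0key : ∀ v x : V, x ∈ S1 → a (R0 v) x = a v x := by
    intro v x hx
    have h1 : a (R0 v) x = ⟪(y (ye.symm (pr (Z v))) : V), x⟫_ℂ :=
      ykey (ye.symm (pr (Z v))) x hx
    rw [h1, hR0eq]
    have h0 : ⟪(Z v - pr (Z v) : V), x⟫_ℂ = 0 :=
      Submodule.starProjection_inner_eq_zero (Z v) x hx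
    rw [inner_sub_left, sub_eq_zero] at h0
    rw [← h0, hZ]
  have hR0fix : ∀ w ∈ S2, R0 w = w := by
    intro w hw
    have h1 : y ⟨w, hw⟩ = pr (Z w) := rfl
    have : ye.symm (pr (Z w)) = ⟨w, hw⟩ := by
      rw [← h1]
      exact ye.symm_apply_apply ⟨w, hw⟩
    show (↑(ye.symm (pr (Z w))) : V) = w
    rw [this]
  have hR0norm : ∀ v : V, ‖R0 v‖ ≤ β⁻¹ * b * ‖v‖ := by
    intro v
    have h1 : β * ‖R0 v‖ ≤ ‖(y (ye.symm (pr (Z v))) : V)‖ := βlow _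
    rw [hR0eq] at h1
    have h2 : ‖(pr (Z v) : V)‖ ≤ b * ‖v‖ := by
      calc ‖(pr (Z v) : V)‖ = ‖pr (Z v)‖ := rfl
        _ ≤ ‖pr‖ * ‖Z v‖ := pr.le_opNorm _
        _ ≤ 1 * ‖Z v‖ := by
            gcongr ?_ * ?_
            exact Submodule.orthogonalProjectionOnto_norm_le S1
        _ ≤ b * ‖v‖ := by rw [one_mul]; exact hZb _
    have h3 : β * ‖R0 v‖ ≤ b * ‖v‖ := h1.trans h2
    calc ‖R0 v‖ = β⁻¹ * (β * ‖R0 v‖) := by field_simp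
      _ ≤ β⁻¹ * (b * ‖v‖) := by gcongr
      _ = β⁻¹ * b * ‖v‖ := by ring
  refine ⟨R0.mkContinuous (β⁻¹ * b) hR0norm, hR0mem, hR0key, hR0fix, hR0norm⟩

end AuxiliaryLemmas

set_option maxHeartbeats 2000000 in
/-- Lemma `Tgen`: let `T*` be the `H`-adjoint of `T`.  Under the
`V`-convergence hypotheses, if `S_{2,h}` satisfies the approximation property
`β(h)⁻¹ inf_{w ∈ S_{2,h}} ‖v - w‖_V → 0` for each `v ∈ V`, then `T*` maps `V` into `V`,
and whenever `γ(h) := sup_{v ∈ S_{2,h}, ‖v‖_V = 1} inf_{w ∈ S_{2,h}} ‖T*v - w‖_V → 0`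
one has `ε_V(h) → 0` and `ε_V(h) = O(γ(h))`. -/
theorem stmt7 {V H : Type*} [NormedAddCommGroup V] [InnerProductSpace ℂ V] [CompleteSpace V]
    [NormedAddCommGroup H] [InnerProductSpace ℂ H] [CompleteSpace H]
    (F : FormSetting V H)
    (lam : ℂ) (hlam0 : lam ≠ 0) (hiso : IsIsolatedEig (F.T ∘L F.incl) lam⁻¹)
    (m : ℕ) (hm : 0 < m) (U : Submodule ℂ V) (hU : U = maxInv (F.T ∘L F.incl) lam⁻¹)
    (hUdim : Module.finrank ℂ U = m)
    (S1 S2 : ℝ → Submodule ℂ V)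
    (hfin1 : ∀ h : ℝ, 0 < h → FiniteDimensional ℂ (S1 h))
    (hfin2 : ∀ h : ℝ, 0 < h → FiniteDimensional ℂ (S2 h))
    (hdim : ∀ h : ℝ, 0 < h → Module.finrank ℂ (S1 h) = Module.finrank ℂ (S2 h))
    (beta : ℝ → ℝ) (hbeta : ∀ h : ℝ, 0 < h → beta h = infSupForm F.a (S1 h) (S2 h))
    (hbeta_pos : ∀ h : ℝ, 0 < h → 0 < beta h)
    (P : ℝ → V →L[ℂ] V)
    (hPrange : ∀ h : ℝ, 0 < h → ∀ v : V, P h v ∈ S1 h)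
    (hPorth : ∀ h : ℝ, 0 < h → ∀ u ∈ S2 h, ∀ v : V, F.a u (v - P h v) = 0)
    (Th : ℝ → V →L[ℂ] V)
    (hTh : ∀ h : ℝ, 0 < h → Th h = (P h) ∘L (F.T ∘L F.incl) ∘L (P h))
    -- the `V`-convergence hypotheses
    (hconv1 : ∀ v : V,
      Tendsto (fun h => (beta h)⁻¹ * Metric.infDist v ((S1 h : Set V))) (𝓝[>] 0) (𝓝 0))
    (hconv2 : Tendsto (fun h => opGap (Th h) (F.T ∘L F.incl)) (𝓝[>] 0) (𝓝 0))
    -- the approximation property for `S_{2,h}`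
    (happrox : ∀ v : V,
      Tendsto (fun h => (beta h)⁻¹ * Metric.infDist v ((S2 h : Set V))) (𝓝[>] 0) (𝓝 0))
    -- `T*`, the `H`-adjoint of `T` (as an operator in `H`)
    (Tad : H →L[ℂ] H) (hTad : Tad = ContinuousLinearMap.adjoint (F.incl ∘L F.T)) :
    -- `T*` maps `V` into `V`, and if `γ(h) → 0` then `ε_V(h) → 0` with `ε_V(h) = O(γ(h))`
    (∀ v : V, Tad (F.incl v) ∈ Set.range F.incl) ∧
    ∀ TsV : V → V, (∀ v : V, F.incl (TsV v) = Tad (F.incl v)) →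
      ∀ gam : ℝ → ℝ,
        (∀ h : ℝ, 0 < h →
          gam h = ⨆ v : {v : V // v ∈ S2 h ∧ ‖v‖ = 1},
            Metric.infDist (TsV (v : V)) ((S2 h : Set V))) →
        Tendsto gam (𝓝[>] (0 : ℝ)) (𝓝 0) →
        (Tendsto (fun h => epsV (F.T ∘L F.incl) (P h) U (S1 h)) (𝓝[>] (0 : ℝ)) (𝓝 0) ∧
         ∃ C > (0 : ℝ), ∀ᶠ h in 𝓝[>] (0 : ℝ),
            epsV (F.T ∘L F.incl) (P h) U (S1 h) ≤ C * gam h) := by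
  classical
  obtain ⟨Z, Sf, hZ, hZb, hSf⟩ := F.exists_sol
  -- Part 1: `T*` maps `V` into `V`, witnessed by the adjoint solution operator `Sf`.
  have eqTad : ∀ x : H, F.incl (Sf x) = Tad x := by
    intro x
    refine ext_inner_right ℂ fun y => ?_
    rw [hTad, ContinuousLinearMap.adjoint_inner_left]
    have h1 := F.hT (Sf x) y
    have h2 := hSf x (F.T y)
    rw [← h1, h2, ContinuousLinearMap.comp_apply]
  refine ⟨fun v => ⟨Sf (F.incl v), eqTad (F.incl v)⟩, ?_⟩
  intro TsV hTsV gam hgam hgam0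
  have hTsVeq : ∀ v, TsV v = Sf (F.incl v) := fun v => F.incl_inj (by rw [hTsV v, eqTad])
  have akey : ∀ v x : V, F.a (TsV v) x = ⟪F.incl v, F.incl x⟫_ℂ := fun v x => by
    rw [hTsVeq]; exact hSf _ x
  have auniq : ∀ p q : V, (∀ x : V, F.a p x = F.a q x) → p = q := by
    intro p q hpq
    have h1 : F.a (p - q) (p - q) = 0 := by
      have e1 : F.a (p - q) = F.a p - F.a q := map_sub F.a p q
      rw [e1, LinearMap.sub_apply, hpq, sub_self]
    have h2 := F.equiv_norm_lo (p - q)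
    rw [h1, Complex.zero_re] at h2
    have h3 : ‖p - q‖ ^ 2 ≤ 0 := by
      by_contra hpos
      push_neg at hpos
      nlinarith [F.equiv_lo_pos]
    have h4 : ‖p - q‖ = 0 :=
      (pow_eq_zero_iff two_ne_zero).mp (le_antisymm h3 (sq_nonneg _))
    exact sub_eq_zero.mp (norm_eq_zero.mp h4)
  have hTsVsmul : ∀ (cc : ℂ) (v : V), TsV (cc • v) = cc • TsV v := by
    intro cc v
    refine auniq _ _ fun x => ?_
    calc F.a (TsV (cc • v)) x = ⟪F.incl (cc • v), F.incl x⟫_ℂ := akey _ _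
      _ = ⟪cc • F.incl v, F.incl x⟫_ℂ := by rw [map_smul]
      _ = (starRingEnd ℂ) cc * ⟪F.incl v, F.incl x⟫_ℂ := inner_smul_left _ _ _
      _ = (starRingEnd ℂ) cc * F.a (TsV v) x := by rw [akey]
      _ = F.a (cc • TsV v) x := by
          rw [LinearMap.map_smulₛₗ, LinearMap.smul_apply, smul_eq_mul]
  have hTsV0 : TsV 0 = 0 := by
    have h := hTsVsmul 0 0
    rwa [zero_smul, zero_smul] at h
  have hTsVnorm : ∀ v, ‖TsV v‖ ≤ F.equiv_lo⁻¹ * ‖v‖ := by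
    intro v
    have hlo := F.equiv_lo_pos
    rcases eq_or_ne (TsV v) 0 with h0 | h0
    · rw [h0, norm_zero]; positivity
    have hp : 0 < ‖TsV v‖ := norm_pos_iff.mpr h0
    have h1 : F.equiv_lo * ‖TsV v‖ ^ 2 ≤ (F.a (TsV v) (TsV v)).re := F.equiv_norm_lo _
    have h2 : (F.a (TsV v) (TsV v)).re ≤ ‖v‖ * ‖TsV v‖ := by
      rw [akey]
      calc (⟪F.incl v, F.incl (TsV v)⟫_ℂ).re ≤ ‖⟪F.incl v, F.incl (TsV v)⟫_ℂ‖ := Complex.re_le_norm _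
        _ = ‖⟪F.incl v, F.incl (TsV v)⟫_ℂ‖ := rfl
        _ ≤ ‖F.incl v‖ * ‖F.incl (TsV v)‖ := norm_inner_le_norm _ _
        _ ≤ ‖v‖ * ‖TsV v‖ :=
            mul_le_mul (F.incl_norm v) (F.incl_norm _) (norm_nonneg _) (norm_nonneg _)
    rw [inv_mul_eq_div, le_div_iff₀ hlo]
    nlinarith
  have hRex : ∀ h : ℝ, 0 < h → ∃ R : V →L[ℂ] V, (∀ v, R v ∈ S2 h) ∧
      (∀ v x : V, x ∈ S1 h → F.a (R v) x = F.a v x) ∧ (∀ w ∈ S2 h, R w = w) ∧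
      (∀ v, ‖R v‖ ≤ (beta h)⁻¹ * F.bound * ‖v‖) := by
    intro h hh
    haveI := hfin1 h hh
    haveI := hfin2 h hh
    exact exists_R F.a Z hZ F.bound hZb (S1 h) (S2 h) (hdim h hh) (beta h)
      (hbeta_pos h hh) (hbeta h hh)
  choose R hRmem hRkey hRfix hRnorm using hRex
  -- uniform boundedness of the adjoint projections, via Banach–Steinhaus
  have hMex : ∃ M : ℝ, ∀ᶠ h in 𝓝[>] (0 : ℝ), ∀ hh : 0 < h, ‖R h hh‖ ≤ M := by
    by_contra hcon
    push_neg at hcon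
    have hseq : ∀ n : ℕ, ∃ h : ℝ, (∃ hh : 0 < h, (n : ℝ) < ‖R h hh‖) ∧
        h ∈ Set.Ioo (0 : ℝ) (1 / ((n : ℝ) + 1)) := by
      intro n
      have hIoo : Set.Ioo (0 : ℝ) (1 / ((n : ℝ) + 1)) ∈ 𝓝[>] (0 : ℝ) :=
        Ioo_mem_nhdsGT (by positivity)
      have hfreq : ∃ᶠ h in 𝓝[>] (0 : ℝ), ¬ ∀ hh : 0 < h, ‖R h hh‖ ≤ (n : ℝ) :=
        (hcon (n : ℝ)).mono fun h hf => by push_neg; exact hf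
      have hfreq' : ∃ᶠ h in 𝓝[>] (0 : ℝ), ∃ hh : 0 < h, (n : ℝ) < ‖R h hh‖ :=
        hfreq.mono fun h hf => by push_neg at hf; exact hf
      exact (hfreq'.and_eventually (eventually_of_mem hIoo fun x hx => hx)).exists
    choose hs hex hmem using hseq
    choose hpos hbig using hex
    have hten : Tendsto hs atTop (𝓝[>] (0 : ℝ)) := by
      rw [tendsto_nhdsWithin_iff]
      refine ⟨?_, Eventually.of_forall fun n => (hmem n).1⟩
      exact squeeze_zero (fun n => (hmem n).1.le) (fun n => (hmem n).2.le)
        tendsto_one_div_add_atTop_nhds_zero_nat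
    have hpt : ∀ v : V, ∃ Cv : ℝ, ∀ n, ‖R (hs n) (hpos n) v‖ ≤ Cv := by
      intro v
      have hnn : Tendsto (fun n => ‖v‖ + ‖v‖ +
          F.bound * ((beta (hs n))⁻¹ * Metric.infDist v ((S2 (hs n) : Set V))))
          atTop (𝓝 (‖v‖ + ‖v‖ + F.bound * 0)) :=
        tendsto_const_nhds.add (((happrox v).comp hten).const_mul F.bound)
      obtain ⟨Cv, hCv⟩ := hnn.bddAbove_range
      refine ⟨Cv, fun n => ?_⟩
      have hS2ne : ((S2 (hs n) : Set V)).Nonempty := ⟨0, (S2 (hs n)).zero_mem⟩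
      have hβpos := hbeta_pos (hs n) (hpos n)
      have hK : (0 : ℝ) < (beta (hs n))⁻¹ * F.bound + 1 := by
        have := F.bound_pos
        positivity
      have hCea : ‖R (hs n) (hpos n) v‖ - ‖v‖ ≤
          ((beta (hs n))⁻¹ * F.bound + 1) * Metric.infDist v ((S2 (hs n) : Set V)) := by
        apply le_mul_infDist hS2ne hK
        intro s hsmem
        have h1 : R (hs n) (hpos n) v = R (hs n) (hpos n) (v - s) + s := by
          rw [map_sub, hRfix (hs n) (hpos n) s hsmem]; abel
        have h2 : ‖R (hs n) (hpos n) v‖ ≤ ‖R (hs n) (hpos n) (v - s)‖ + ‖s‖ :=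
          h1 ▸ norm_add_le _ _
        have h3 : ‖R (hs n) (hpos n) (v - s)‖ ≤ (beta (hs n))⁻¹ * F.bound * ‖v - s‖ :=
          hRnorm _ _ _
        have h4 : ‖s‖ ≤ ‖v‖ + ‖v - s‖ := by
          calc ‖s‖ = ‖v - (v - s)‖ := by congr 1; abel
            _ ≤ ‖v‖ + ‖v - s‖ := norm_sub_le _ _
        rw [dist_eq_norm]
        nlinarith [norm_nonneg (v - s)]
      have h5 : Metric.infDist v ((S2 (hs n) : Set V)) ≤ ‖v‖ := by
        have := Metric.infDist_le_dist_of_mem (x := v) ((S2 (hs n)).zero_mem)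
        rwa [dist_zero_right] at this
      have h6 : ‖R (hs n) (hpos n) v‖ ≤ ‖v‖ + ‖v‖ +
          F.bound * ((beta (hs n))⁻¹ * Metric.infDist v ((S2 (hs n) : Set V))) := by
        nlinarith [Metric.infDist_nonneg (x := v) (s := ((S2 (hs n) : Set V)))]
      exact h6.trans (hCv (Set.mem_range_self n))
    obtain ⟨C', hC'⟩ := banach_steinhaus hpt
    have h1 : ((⌈C'⌉₊ + 1 : ℕ) : ℝ) < ‖R (hs (⌈C'⌉₊ + 1)) (hpos (⌈C'⌉₊ + 1))‖ :=
      hbig (⌈C'⌉₊ + 1)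
    have h2 : ‖R (hs (⌈C'⌉₊ + 1)) (hpos (⌈C'⌉₊ + 1))‖ ≤ C' := hC' (⌈C'⌉₊ + 1)
    have h3 : C' ≤ (⌈C'⌉₊ : ℝ) := Nat.le_ceil C'
    push_cast at h1
    linarith
  obtain ⟨M0, hM0⟩ := hMex
  set M : ℝ := max M0 1 with hMdef
  have hM1 : (1 : ℝ) ≤ M := le_max_right _ _
  have hMpos : (0 : ℝ) < M := lt_of_lt_of_le one_pos hM1
  have hM : ∀ᶠ h in 𝓝[>] (0 : ℝ), ∀ hh : 0 < h, ‖R h hh‖ ≤ M :=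
    hM0.mono fun h hher hh => (hher hh).trans (le_max_left _ _)
  have hb := F.bound_pos
  have hc := F.equiv_lo_pos
  set K : ℝ := F.bound * M / F.equiv_lo with hKdef
  have hKpos : 0 < K := by positivity
  set C : ℝ := K * (1 + K) with hCdef
  have hCpos : 0 < C := by positivity
  have hgamnn : ∀ h : ℝ, 0 < h → 0 ≤ gam h := fun h hh => by
    rw [hgam h hh]; exact Real.iSup_nonneg fun v => Metric.infDist_nonneg
  have key : ∀ᶠ h in 𝓝[>] (0 : ℝ), epsV (F.T ∘L F.incl) (P h) U (S1 h) ≤ C * gam h := by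
    filter_upwards [hM, self_mem_nhdsWithin] with h hMh hhset
    have hh : (0 : ℝ) < h := hhset
    haveI := hfin1 h hh
    haveI := hfin2 h hh
    have hRb : ∀ v : V, ‖R h hh v‖ ≤ M * ‖v‖ := fun v =>
      ((R h hh).le_opNorm v).trans (mul_le_mul_of_nonneg_right (hMh hh) (norm_nonneg v))
    have hgamh := hgamnn h hh
    have hco : ∀ x : V, x ∈ S1 h → F.equiv_lo * ‖x‖ ^ 2 ≤ ‖F.a (R h hh x) x‖ := by
      intro x hx
      have h1 := F.equiv_norm_lo x
      rw [← hRkey h hh x x hx] at h1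
      exact h1.trans ((Complex.re_le_norm _).trans_eq rfl)
    have hPfix : ∀ v ∈ S1 h, P h v = v := by
      intro v hv
      have hx : v - P h v ∈ S1 h := sub_mem hv (hPrange h hh v)
      have h0 : F.a (R h hh (v - P h v)) (v - P h v) = 0 :=
        hPorth h hh _ (hRmem h hh _) v
      have h1 := hco _ hx
      rw [h0, norm_zero] at h1
      have h2 : ‖v - P h v‖ ^ 2 ≤ 0 := by
        by_contra hpos
        push_neg at hpos
        nlinarith
      have h3 : ‖v - P h v‖ = 0 :=
        (pow_eq_zero_iff two_ne_zero).mp (le_antisymm h2 (sq_nonneg _))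
      have h4 := norm_eq_zero.mp h3
      rw [sub_eq_zero] at h4
      exact h4.symm
    have hPbound : ∀ v : V, ‖P h v‖ ≤ K * ‖v‖ := by
      intro v
      have hx := hPrange h hh v
      have h1 := hco _ hx
      have h0 : F.a (R h hh (P h v)) (v - P h v) = 0 := hPorth h hh _ (hRmem h hh _) v
      have h0' := map_sub (F.a (R h hh (P h v))) v (P h v)
      rw [h0] at h0'
      have h2 : F.a (R h hh (P h v)) (P h v) = F.a (R h hh (P h v)) v :=
        (sub_eq_zero.mp h0'.symm).symm
      rw [h2] at h1
      have h3 : ‖F.a (R h hh (P h v)) v‖ ≤ F.bound * (M * ‖P h v‖) * ‖v‖ := by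
        refine (F.a_bounded _ _).trans ?_
        have := hRb (P h v)
        gcongr
      have h4 := h1.trans h3
      rcases eq_or_lt_of_le (norm_nonneg (P h v)) with hz | hz
      · rw [← hz]; positivity
      · rw [hKdef, div_mul_eq_mul_div, le_div_iff₀ hc]
        nlinarith
    show (⨆ u : U, ‖P h ((F.T ∘L F.incl) ((u : V) - P h (u : V)))‖ /
        Metric.infDist (u : V) ((S1 h : Set V))) ≤ C * gam h
    refine Real.iSup_le (fun u => ?_) (mul_nonneg hCpos.le hgamh)
    rcases eq_or_lt_of_le (Metric.infDist_nonneg (x := (u : V)) (s := ((S1 h : Set V))))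
      with hdu | hdu
    · have hclosed : IsClosed ((S1 h : Set V)) := (S1 h).closed_of_finiteDimensional
      have humem : (u : V) ∈ S1 h :=
        (hclosed.mem_iff_infDist_zero ⟨0, (S1 h).zero_mem⟩).mpr hdu.symm
      have he0 : (u : V) - P h (u : V) = 0 := by rw [hPfix _ humem, sub_self]
      rw [he0, map_zero, map_zero, norm_zero, zero_div]
      exact mul_nonneg hCpos.le hgamh
    · have hxS1 : P h ((F.T ∘L F.incl) ((u : V) - P h (u : V))) ∈ S1 h := hPrange h hh _
      have hwS2 : R h hh (P h ((F.T ∘L F.incl) ((u : V) - P h (u : V)))) ∈ S2 h :=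
        hRmem h hh _
      have hawx : ∀ z ∈ S2 h,
          F.a (R h hh (P h ((F.T ∘L F.incl) ((u : V) - P h (u : V)))))
            (P h ((F.T ∘L F.incl) ((u : V) - P h (u : V)))) =
          F.a (TsV (R h hh (P h ((F.T ∘L F.incl) ((u : V) - P h (u : V))))) - z)
            ((u : V) - P h (u : V)) := by
        intro z hz
        set w := R h hh (P h ((F.T ∘L F.incl) ((u : V) - P h (u : V)))) with hwdef
        have h1 : F.a w ((F.T ∘L F.incl) ((u : V) - P h (u : V)) -
            P h ((F.T ∘L F.incl) ((u : V) - P h (u : V)))) = 0 :=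
          hPorth h hh w hwS2 _
        have h1' := map_sub (F.a w) ((F.T ∘L F.incl) ((u : V) - P h (u : V)))
          (P h ((F.T ∘L F.incl) ((u : V) - P h (u : V))))
        rw [h1] at h1'
        have h2 : F.a w (P h ((F.T ∘L F.incl) ((u : V) - P h (u : V)))) =
            F.a w ((F.T ∘L F.incl) ((u : V) - P h (u : V))) :=
          (sub_eq_zero.mp h1'.symm).symm
        have h3 : F.a w ((F.T ∘L F.incl) ((u : V) - P h (u : V))) =
            ⟪F.incl w, F.incl ((u : V) - P h (u : V))⟫_ℂ := by
          rw [ContinuousLinearMap.comp_apply]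
          exact F.hT w (F.incl ((u : V) - P h (u : V)))
        have h4 : ⟪F.incl w, F.incl ((u : V) - P h (u : V))⟫_ℂ =
            F.a (TsV w) ((u : V) - P h (u : V)) := (akey w _).symm
        have h5 : F.a z ((u : V) - P h (u : V)) = 0 := hPorth h hh z hz (u : V)
        rw [h2, h3, h4, map_sub F.a (TsV w) z, LinearMap.sub_apply, h5, sub_zero]
      have hco2 : F.equiv_lo * ‖P h ((F.T ∘L F.incl) ((u : V) - P h (u : V)))‖ ^ 2 ≤
          F.bound * ‖(u : V) - P h (u : V)‖ *
            Metric.infDist (TsV (R h hh (P h ((F.T ∘L F.incl) ((u : V) - P h (u : V))))))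
              ((S2 h : Set V)) := by
        rcases eq_or_lt_of_le (norm_nonneg ((u : V) - P h (u : V))) with he0 | hepos
        · have hez : (u : V) - P h (u : V) = 0 := norm_eq_zero.mp he0.symm
          have hL : P h ((F.T ∘L F.incl) ((u : V) - P h (u : V))) = 0 := by
            rw [hez, map_zero, map_zero]
          calc F.equiv_lo * ‖P h ((F.T ∘L F.incl) ((u : V) - P h (u : V)))‖ ^ 2 = 0 := by
                rw [hL, norm_zero]; ring
            _ ≤ _ := mul_nonneg (mul_nonneg hb.le (norm_nonneg _)) Metric.infDist_nonneg
        · have hK2 : (0 : ℝ) < F.bound * ‖(u : V) - P h (u : V)‖ := by positivity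
          apply le_mul_infDist ⟨0, (S2 h).zero_mem⟩ hK2
          intro s hs
          have h1 := hco _ hxS1
          rw [hawx s hs] at h1
          refine h1.trans ?_
          have h2 := F.a_bounded
            (TsV (R h hh (P h ((F.T ∘L F.incl) ((u : V) - P h (u : V))))) - s)
            ((u : V) - P h (u : V))
          rw [dist_eq_norm]
          nlinarith [norm_nonneg
            (TsV (R h hh (P h ((F.T ∘L F.incl) ((u : V) - P h (u : V))))) - s),
            norm_nonneg ((u : V) - P h (u : V))]
      have hgb : Metric.infDist
          (TsV (R h hh (P h ((F.T ∘L F.incl) ((u : V) - P h (u : V))))))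
            ((S2 h : Set V)) ≤
          gam h * ‖R h hh (P h ((F.T ∘L F.incl) ((u : V) - P h (u : V))))‖ := by
        set w := R h hh (P h ((F.T ∘L F.incl) ((u : V) - P h (u : V)))) with hwdef
        rcases eq_or_ne w 0 with hw0 | hw0
        · rw [hw0, hTsV0, norm_zero, mul_zero,
            Metric.infDist_zero_of_mem (Submodule.zero_mem _)]
        · have hnw : 0 < ‖w‖ := norm_pos_iff.mpr hw0
          have hmemj : ((‖w‖⁻¹ : ℝ) : ℂ) • w ∈ S2 h := (S2 h).smul_mem _ hwS2
          have hnormj : ‖((‖w‖⁻¹ : ℝ) : ℂ) • w‖ = 1 := by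
            rw [norm_smul, Complex.norm_real, Real.norm_eq_abs, abs_of_pos (by positivity)]
            field_simp
          set j : {v : V // v ∈ S2 h ∧ ‖v‖ = 1} := ⟨((‖w‖⁻¹ : ℝ) : ℂ) • w, hmemj, hnormj⟩
            with hjdef
          have hbdd : BddAbove (Set.range fun v : {v : V // v ∈ S2 h ∧ ‖v‖ = 1} =>
              Metric.infDist (TsV (v : V)) ((S2 h : Set V))) := by
            refine ⟨F.equiv_lo⁻¹, fun t ht => ?_⟩
            obtain ⟨v, rfl⟩ := ht
            calc Metric.infDist (TsV (v : V)) ((S2 h : Set V)) ≤ dist (TsV (v : V)) 0 :=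
                  Metric.infDist_le_dist_of_mem (Submodule.zero_mem _)
              _ = ‖TsV (v : V)‖ := dist_zero_right _
              _ ≤ F.equiv_lo⁻¹ * ‖(v : V)‖ := hTsVnorm _
              _ = F.equiv_lo⁻¹ := by rw [v.2.2, mul_one]
          have hj : Metric.infDist (TsV (j : V)) ((S2 h : Set V)) ≤ gam h := by
            rw [hgam h hh]
            exact le_ciSup hbdd j
          have hsm : ((‖w‖ : ℝ) : ℂ) • (((‖w‖⁻¹ : ℝ) : ℂ) • w) = w := by
            rw [smul_smul]
            have hcc : ((‖w‖ : ℝ) : ℂ) * ((‖w‖⁻¹ : ℝ) : ℂ) = 1 := by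
              rw [← Complex.ofReal_mul, mul_inv_cancel₀ (ne_of_gt hnw), Complex.ofReal_one]
            rw [hcc, one_smul]
          have hdecomp : TsV w = ((‖w‖ : ℝ) : ℂ) • TsV (((‖w‖⁻¹ : ℝ) : ℂ) • w) := by
            rw [← hTsVsmul, hsm]
          calc Metric.infDist (TsV w) ((S2 h : Set V))
              = Metric.infDist (((‖w‖ : ℝ) : ℂ) • TsV (((‖w‖⁻¹ : ℝ) : ℂ) • w))
                ((S2 h : Set V)) := by rw [hdecomp]
            _ ≤ ‖((‖w‖ : ℝ) : ℂ)‖ * Metric.infDist (TsV (((‖w‖⁻¹ : ℝ) : ℂ) • w))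
                ((S2 h : Set V)) := infDist_smul_le _ _ _
            _ ≤ ‖w‖ * gam h := by
                rw [Complex.norm_real, Real.norm_eq_abs, abs_of_pos hnw]
                exact mul_le_mul_of_nonneg_left hj hnw.le
            _ = gam h * ‖w‖ := mul_comm _ _
      have hxb : ‖P h ((F.T ∘L F.incl) ((u : V) - P h (u : V)))‖ ≤
          K * gam h * ‖(u : V) - P h (u : V)‖ := by
        have h2 : Metric.infDist
            (TsV (R h hh (P h ((F.T ∘L F.incl) ((u : V) - P h (u : V))))))
              ((S2 h : Set V)) ≤
            gam h * (M * ‖P h ((F.T ∘L F.incl) ((u : V) - P h (u : V)))‖) :=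
          hgb.trans (mul_le_mul_of_nonneg_left (hRb _) hgamh)
        rcases eq_or_lt_of_le
          (norm_nonneg (P h ((F.T ∘L F.incl) ((u : V) - P h (u : V))))) with hx0 | hxpos
        · rw [← hx0]
          exact mul_nonneg (mul_nonneg hKpos.le hgamh) (norm_nonneg _)
        · have h3 : F.equiv_lo * ‖P h ((F.T ∘L F.incl) ((u : V) - P h (u : V)))‖ ^ 2 ≤
              F.bound * ‖(u : V) - P h (u : V)‖ *
                (gam h * (M * ‖P h ((F.T ∘L F.incl) ((u : V) - P h (u : V)))‖)) := by
            refine hco2.trans ?_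
            refine mul_le_mul_of_nonneg_left h2 ?_
            positivity
          rw [hKdef, div_mul_eq_mul_div, div_mul_eq_mul_div, le_div_iff₀ hc]
          nlinarith [norm_nonneg ((u : V) - P h (u : V))]
      have heb : ‖(u : V) - P h (u : V)‖ ≤
          (1 + K) * Metric.infDist (u : V) ((S1 h : Set V)) := by
        apply le_mul_infDist ⟨0, (S1 h).zero_mem⟩ (by positivity)
        intro s hs
        have h1 : (u : V) - P h (u : V) = ((u : V) - s) - P h ((u : V) - s) := by
          rw [map_sub, hPfix s hs]
          abel
        rw [dist_eq_norm]
        calc ‖(u : V) - P h (u : V)‖ = ‖((u : V) - s) - P h ((u : V) - s)‖ := by rw [h1]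
          _ ≤ ‖(u : V) - s‖ + ‖P h ((u : V) - s)‖ := norm_sub_le _ _
          _ ≤ ‖(u : V) - s‖ + K * ‖(u : V) - s‖ := by
              have := hPbound ((u : V) - s)
              linarith
          _ = (1 + K) * ‖(u : V) - s‖ := by ring
      rw [div_le_iff₀ hdu]
      calc ‖P h ((F.T ∘L F.incl) ((u : V) - P h (u : V)))‖
          ≤ K * gam h * ‖(u : V) - P h (u : V)‖ := hxb
        _ ≤ K * gam h * ((1 + K) * Metric.infDist (u : V) ((S1 h : Set V))) :=
            mul_le_mul_of_nonneg_left heb (mul_nonneg hKpos.le hgamh)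
        _ = C * gam h * Metric.infDist (u : V) ((S1 h : Set V)) := by
            rw [hCdef]; ring
  constructor
  · have h0 : ∀ᶠ h in 𝓝[>] (0 : ℝ), 0 ≤ epsV (F.T ∘L F.incl) (P h) U (S1 h) :=
      Eventually.of_forall fun h => Real.iSup_nonneg fun u =>
        div_nonneg (norm_nonneg _) Metric.infDist_nonneg
    have hCg : Tendsto (fun h => C * gam h) (𝓝[>] (0 : ℝ)) (𝓝 0) := by
      simpa using hgam0.const_mul C
    exact squeeze_zero' h0 key hCg
  · exact ⟨C, hCpos, key⟩
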